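/- arXiv:1604.07846 — 2 statements merged into one kernel-verified Lean document; each statement's English description precedes it below -/
import Mathlib

section
/- For every real β, nonnegative integer ℓ, and n ≥ ℓ, the extended Jacobi polynomial satisfies J_n^{-ℓ,β}(t) = ((-1)^ℓ (n-ℓ)! / (2^ℓ n!)) · (1-t)^ℓ · J_{n-ℓ}^{ℓ,β}(t). -/
open Finset MeasureTheory

/-- Pochhammer symbol `(a)_m` (rising factorial). -/
noncomputable def poch (a : ℝ) (m : ℕ) : ℝ := (ascPochhammer ℝ m).eval a

/-- Extended Jacobi polynomial `J_n^{α,β}(t)`.  Terms with vanishing denominator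
(which are exactly the terms with index below `ι₀`) are `0` by the division
convention, so this agrees with the paper's definition. -/
noncomputable def J (α β : ℝ) (n : ℕ) (t : ℝ) : ℝ :=
  ∑ k ∈ Finset.range (n + 1),
    poch ((k : ℝ) + α + 1) (n - k) /
      (((n - k).factorial : ℝ) * (k.factorial : ℝ) *
        poch ((n : ℝ) + α + β + (k : ℝ) + 1) (n - k)) *
      ((t - 1) / 2) ^ k

/-- Classical Jacobi polynomial `P_n^{(α,β)}(t)`. -/
noncomputable def P (α β : ℝ) (n : ℕ) (t : ℝ) : ℝ :=
  ∑ k ∈ Finset.range (n + 1),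
    poch ((k : ℝ) + α + 1) (n - k) * poch ((n : ℝ) + α + β + 1) k /
      (((n - k).factorial : ℝ) * (k.factorial : ℝ)) * ((t - 1) / 2) ^ k

lemma poch_succ (a : ℝ) (s : ℕ) : poch a (s + 1) = poch a s * (a + s) := by
  simp [poch, ascPochhammer_succ_right]

lemma poch_prod (a : ℝ) (s : ℕ) : poch a s = ∏ i ∈ Finset.range s, (a + i) := by
  induction s with
  | zero => simp [poch]
  | succ s ih => rw [poch_succ, ih, Finset.prod_range_succ]

lemma poch_neg (i s : ℕ) (h : i < s) : poch (-(i : ℝ)) s = 0 := by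
  rw [poch_prod]
  exact Finset.prod_eq_zero (Finset.mem_range.2 h) (by simp)

lemma poch_one (j s : ℕ) : poch ((j : ℝ) + 1) s = ((j + s).factorial : ℝ) / (j.factorial : ℝ) := by
  induction s with
  | zero => simp [poch, div_self (Nat.cast_ne_zero.2 (Nat.factorial_ne_zero j) : (j.factorial:ℝ) ≠ 0)]
  | succ s ih =>
      rw [poch_succ, ih]
      rw [show j + (s + 1) = (j + s) + 1 from rfl, Nat.factorial_succ]
      have : (j.factorial : ℝ) ≠ 0 := Nat.cast_ne_zero.2 (Nat.factorial_ne_zero j)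
      field_simp
      push_cast; ring

theorem stmt3 (β : ℝ) (ℓ n : ℕ) (h : ℓ ≤ n) (t : ℝ) :
    J (-(ℓ : ℝ)) β n t =
      (-1) ^ ℓ * ((n - ℓ).factorial : ℝ) / (2 ^ ℓ * (n.factorial : ℝ)) * (1 - t) ^ ℓ *
        J (ℓ : ℝ) β (n - ℓ) t := by
  obtain ⟨m, rfl⟩ : ∃ m, n = ℓ + m := ⟨n - ℓ, by omega⟩
  rw [show ℓ + m - ℓ = m from by omega]
  unfold J
  rw [Finset.mul_sum, show ℓ + m + 1 = ℓ + (m + 1) from rfl, Finset.sum_range_add]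
  have hz : ∀ k ∈ Finset.range ℓ,
      poch ((k : ℝ) + -(ℓ : ℝ) + 1) (ℓ + m - k) /
        (((ℓ + m - k).factorial : ℝ) * (k.factorial : ℝ) *
          poch (((ℓ + m : ℕ) : ℝ) + -(ℓ : ℝ) + β + (k : ℝ) + 1) (ℓ + m - k)) *
        ((t - 1) / 2) ^ k = 0 := by
    intro k hk
    rw [Finset.mem_range] at hk
    have : poch ((k : ℝ) + -(ℓ : ℝ) + 1) (ℓ + m - k) = 0 := by
      rw [show ((k : ℝ) + -(ℓ : ℝ) + 1) = -((ℓ - 1 - k : ℕ) : ℝ) by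
        have : ((ℓ - 1 - k : ℕ) : ℝ) = (ℓ : ℝ) - 1 - k := by
          push_cast [Nat.cast_sub (by omega : 1 ≤ ℓ), Nat.cast_sub (by omega : k ≤ ℓ - 1)]
          ring
        rw [this]; ring]
      exact poch_neg _ _ (by omega)
    simp [this]
  rw [Finset.sum_eq_zero hz, zero_add]
  refine Finset.sum_congr rfl fun j hj => ?_
  rw [Finset.mem_range] at hj
  have hjm : j ≤ m := by omega
  have e0 : ℓ + m - (ℓ + j) = m - j := by omega
  have e1 : ((ℓ + j : ℕ) : ℝ) + -(ℓ : ℝ) + 1 = (j : ℝ) + 1 := by push_cast; ring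
  have e2 : ((ℓ + m : ℕ) : ℝ) + -(ℓ : ℝ) + β + ((ℓ + j : ℕ) : ℝ) + 1
      = ((m : ℕ) : ℝ) + (ℓ : ℝ) + β + (j : ℝ) + 1 := by push_cast; ring
  have e3 : (j : ℝ) + (ℓ : ℝ) + 1 = ((j + ℓ : ℕ) : ℝ) + 1 := by push_cast; ring
  rw [e0, e1, e2, poch_one j (m - j), show j + (m - j) = m from by omega,
    show (j : ℝ) + (ℓ : ℝ) + 1 = ((j + ℓ : ℕ) : ℝ) + 1 from by push_cast; ring,
    poch_one (j + ℓ) (m - j), show j + ℓ + (m - j) = ℓ + m from by omega]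
  set D := poch ((m : ℝ) + (ℓ : ℝ) + β + (j : ℝ) + 1) (m - j) with hDdef
  have hC : (-1 : ℝ) ^ ℓ * (m.factorial : ℝ) / (2 ^ ℓ * ((ℓ + m).factorial : ℝ)) * (1 - t) ^ ℓ
      = (m.factorial : ℝ) / ((ℓ + m).factorial : ℝ) * ((t - 1) / 2) ^ ℓ := by
    have hpow : (1 - t : ℝ) ^ ℓ = (-1) ^ ℓ * 2 ^ ℓ * ((t - 1) / 2) ^ ℓ := by
      rw [← mul_pow, ← mul_pow]; congr 1; ring
    have h2 : ((-1 : ℝ) ^ ℓ) * ((-1 : ℝ) ^ ℓ) = 1 := by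
      rw [← pow_add]; exact Even.neg_one_pow ⟨ℓ, rfl⟩
    have hN : ((ℓ + m).factorial : ℝ) ≠ 0 := Nat.cast_ne_zero.2 (Nat.factorial_ne_zero _)
    have h2l : (2 : ℝ) ^ ℓ ≠ 0 := by positivity
    rw [hpow]
    set x := ((t - 1) / 2 : ℝ) ^ ℓ with hx
    field_simp
    linear_combination x * h2
  rw [hC]
  rcases eq_or_ne D 0 with hD | hD
  · simp [hD]
  · have hfj : (j.factorial : ℝ) ≠ 0 := Nat.cast_ne_zero.2 (Nat.factorial_ne_zero _)
    have hfmj : ((m - j).factorial : ℝ) ≠ 0 := Nat.cast_ne_zero.2 (Nat.factorial_ne_zero _)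
    have hflj : ((ℓ + j).factorial : ℝ) ≠ 0 := Nat.cast_ne_zero.2 (Nat.factorial_ne_zero _)
    have hfjl : ((j + ℓ).factorial : ℝ) ≠ 0 := Nat.cast_ne_zero.2 (Nat.factorial_ne_zero _)
    have hN : ((ℓ + m).factorial : ℝ) ≠ 0 := Nat.cast_ne_zero.2 (Nat.factorial_ne_zero _)
    have hjl : ((j + ℓ).factorial : ℝ) = ((ℓ + j).factorial : ℝ) := by rw [Nat.add_comm]
    rw [hjl]
    field_simp
    ring
end

section
/- For n ≥ 1, J_n^{-n-1,-n}(t) = Σ_{k=0}^n (1/(k!(n-k)!)) ((t-1)/2)^k, and consequently J_n^{-n-1,-n}(t) = J_n^{-n,-n}(t) - (-1)·J_{n-1}^{-n,-n}(t), i.e. the recurrence J_n^{α,β} = J_n^{α+1,β} - τ_n^{α,β} J_{n-1}^{α+1,β} holds with the convention τ_n^{-n-1,-n} = -1. -/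
open Finset MeasureTheory

lemma poch_succ_left (a : ℝ) (m : ℕ) : poch a (m+1) = a * poch (a+1) m := by
  simp [poch, ascPochhammer_succ_left, Polynomial.eval_mul, Polynomial.eval_comp]

lemma poch_succ_right (a : ℝ) (m : ℕ) : poch a (m+1) = poch a m * (a + m) := by
  simp [poch, ascPochhammer_succ_right]

lemma pochA (m : ℕ) : poch (-(m:ℝ)) m = (-1)^m * m.factorial := by
  induction m with
  | zero => simp [poch]
  | succ m ih =>
    rw [poch_succ_left]
    have : -((m:ℝ)+1) + 1 = -(m:ℝ) := by ring
    push_cast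
    rw [this, ih]
    push_cast [Nat.factorial_succ]
    ring

lemma pochB (m : ℕ) : poch (-(m:ℝ)-1) m = (-1)^m * (m+1).factorial := by
  have h := pochA (m+1)
  rw [poch_succ_right] at h
  have h2 : -((m:ℝ)+1) + m = -1 := by ring
  push_cast at h
  rw [h2] at h
  have : poch (-((m:ℝ)+1)) m = (-1:ℝ)^(m+1) * ((m+1).factorial:ℝ) / (-1) := by
    field_simp at h ⊢; linarith [h]
  rw [show -(m:ℝ)-1 = -((m:ℝ)+1) by ring, this]
  ring

lemma pochC (j : ℕ) : poch (-(j:ℝ)) (j+1) = 0 := by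
  rw [poch_succ_right]; simp

theorem stmt8 (n : ℕ) (hn : 1 ≤ n) (t : ℝ) :
    J (-(n : ℝ) - 1) (-(n : ℝ)) n t =
        ∑ k ∈ Finset.range (n + 1),
          1 / ((k.factorial : ℝ) * ((n - k).factorial : ℝ)) * ((t - 1) / 2) ^ k ∧
    J (-(n : ℝ) - 1) (-(n : ℝ)) n t =
        J (-(n : ℝ)) (-(n : ℝ)) n t - (-1) * J (-(n : ℝ)) (-(n : ℝ)) (n - 1) t := by
  set x := (t - 1) / 2 with hx
  have h1 : J (-(n : ℝ) - 1) (-(n : ℝ)) n t =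
      ∑ k ∈ Finset.range (n + 1),
        1 / ((k.factorial : ℝ) * ((n - k).factorial : ℝ)) * x ^ k := by
    unfold J
    refine Finset.sum_congr rfl fun k hk => ?_
    have hk' : k ≤ n := Nat.lt_succ_iff.mp (Finset.mem_range.mp hk)
    have e1 : (k:ℝ) + (-(n:ℝ) - 1) + 1 = -(((n - k : ℕ)):ℝ) := by
      rw [Nat.cast_sub hk']; ring
    have e2 : (n:ℝ) + (-(n:ℝ) - 1) + (-(n:ℝ)) + k + 1 = -(((n - k : ℕ)):ℝ) := by
      rw [Nat.cast_sub hk']; ring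
    rw [e1, e2, pochA, ← hx]
    have f1 : ((n - k).factorial : ℝ) ≠ 0 := Nat.cast_ne_zero.2 (Nat.factorial_ne_zero _)
    have f2 : (k.factorial : ℝ) ≠ 0 := Nat.cast_ne_zero.2 (Nat.factorial_ne_zero _)
    have f3 : ((-1 : ℝ))^(n - k) ≠ 0 := pow_ne_zero _ (by norm_num)
    field_simp
  have h2 : J (-(n : ℝ)) (-(n : ℝ)) n t = 1 / (n.factorial : ℝ) * x ^ n := by
    unfold J
    rw [Finset.sum_range_succ]
    rw [Finset.sum_eq_zero, zero_add]
    · simp only [Nat.sub_self]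
      have : poch ((n:ℝ) + -(n:ℝ) + 1) 0 = 1 := by simp [poch]
      have h2 : poch ((n:ℝ) + -(n:ℝ) + -(n:ℝ) + (n:ℝ) + 1) 0 = 1 := by simp [poch]
      rw [this, h2]
      simp
      exact Or.inl (by rw [hx])
    · intro k hk
      have hk' : k < n := Finset.mem_range.mp hk
      have e0 : n - k = (n - (k+1)) + 1 := by omega
      have e1 : (k:ℝ) + (-(n:ℝ)) + 1 = -(((n - (k+1) : ℕ)):ℝ) := by
        rw [Nat.cast_sub (by omega)]; push_cast; ring
      rw [e0, e1, pochC, zero_div, zero_mul]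
  have h3 : J (-(n : ℝ)) (-(n : ℝ)) (n - 1) t =
      ∑ k ∈ Finset.range n, 1 / ((k.factorial : ℝ) * ((n - k).factorial : ℝ)) * x ^ k := by
    unfold J
    rw [show n - 1 + 1 = n by omega]
    refine Finset.sum_congr rfl fun k hk => ?_
    have hk' : k < n := Finset.mem_range.mp hk
    set m := n - 1 - k with hm
    have c1 : ((m:ℕ):ℝ) = (n:ℝ) - 1 - k := by
      rw [hm, Nat.cast_sub (by omega : k ≤ n - 1), Nat.cast_sub hn]; push_cast; ring
    have c2 : (((n-1:ℕ)):ℝ) = (n:ℝ) - 1 := by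
      rw [Nat.cast_sub hn]; push_cast; ring
    have e1 : (k:ℝ) + (-(n:ℝ)) + 1 = -((m : ℕ):ℝ) := by rw [c1]; ring
    have e2 : (((n-1:ℕ)):ℝ) + (-(n:ℝ)) + (-(n:ℝ)) + k + 1 = -((m:ℕ):ℝ) - 1 := by
      rw [c1, c2]; ring
    rw [e1, e2, pochA, pochB, ← hx]
    have em : m + 1 = n - k := by omega
    rw [em]
    have f1 : ((n - k).factorial : ℝ) ≠ 0 := Nat.cast_ne_zero.2 (Nat.factorial_ne_zero _)
    have f2 : (k.factorial : ℝ) ≠ 0 := Nat.cast_ne_zero.2 (Nat.factorial_ne_zero _)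
    have f3 : (m.factorial : ℝ) ≠ 0 := Nat.cast_ne_zero.2 (Nat.factorial_ne_zero _)
    have f4 : ((-1 : ℝ))^m ≠ 0 := pow_ne_zero _ (by norm_num)
    field_simp
  refine ⟨h1, ?_⟩
  rw [h1, h2, h3, Finset.sum_range_succ, Nat.sub_self]
  simp [Nat.factorial_zero]
  ring
end
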